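/- arXiv:1701.02458 — 4 statements merged into one kernel-verified Lean document; each statement's English description precedes it below -/
import Mathlib

section
/- Let K be a number field of degree n, and let L ⊆ K be a ℚ-vector subspace of K of codimension 1 containing 1. If r ∈ K is such that multiplication by r maps L into L, then r ∈ ℚ. -/
set_option synthInstance.maxHeartbeats 1000000
set_option maxHeartbeats 1000000


/-- If `L` is a codimension-1 `ℚ`-subspace of a number field `K`
containing `1`, and multiplication by `r ∈ K` maps `L` into `L`, then `r ∈ ℚ`. -/
theorem mem_rat_of_mul_stable_hyperplane
    (K : Type*) [Field K] [NumberField K]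
    (L : Submodule ℚ K) (hL : Module.finrank ℚ L = Module.finrank ℚ K - 1)
    (h1 : (1 : K) ∈ L) (r : K) (hr : ∀ x ∈ L, r * x ∈ L) :
    ∃ q : ℚ, r = algebraMap ℚ K q := by
  set F : IntermediateField ℚ K := IntermediateField.adjoin ℚ {r} with hF
  have hint : IsIntegral ℚ r := Algebra.IsIntegral.isIntegral r
  have hadj : F.toSubalgebra = Algebra.adjoin ℚ {r} :=
    IntermediateField.adjoin_simple_toSubalgebra_of_isAlgebraic hint.isAlgebraic
  -- every element of F stabilizes L
  have hstab0 : ∀ a ∈ Algebra.adjoin ℚ ({r} : Set K), ∀ x ∈ L, a * x ∈ L := by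
    intro a ha
    induction ha using Algebra.adjoin_induction with
    | mem a ha =>
      rcases ha with rfl
      exact hr
    | algebraMap q =>
      intro x hx
      have : (algebraMap ℚ K q) * x = q • x := by rw [Algebra.smul_def]
      rw [this]; exact L.smul_mem q hx
    | add a b ha hb iha ihb =>
      intro x hx
      rw [add_mul]; exact L.add_mem (iha x hx) (ihb x hx)
    | mul a b ha hb iha ihb =>
      intro x hx
      rw [mul_assoc]; exact iha _ (ihb x hx)
  have hstab : ∀ (c : F) (x : K), x ∈ L → (c : K) * x ∈ L := by
    intro c x hx
    exact hstab0 c (by rw [← hadj]; exact c.2) x hx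
  -- L as an F-submodule
  let L' : Submodule F K :=
    { carrier := L
      add_mem' := fun ha hb => L.add_mem ha hb
      zero_mem' := L.zero_mem
      smul_mem' := fun c x hx => by
        have := hstab c x hx
        simpa [Algebra.smul_def] using this }
  have hres : L'.restrictScalars ℚ = L := rfl
  have hd1 : Module.finrank ℚ F * Module.finrank F K = Module.finrank ℚ K :=
    Module.finrank_mul_finrank ℚ F K
  have hd2 : Module.finrank ℚ F * Module.finrank F L' = Module.finrank ℚ L :=
    Module.finrank_mul_finrank ℚ F L'
  set d := Module.finrank ℚ F with hd
  have hdvd1 : d ∣ Module.finrank ℚ K := ⟨_, hd1.symm⟩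
  have hdvd2 : d ∣ Module.finrank ℚ K - 1 := hL ▸ ⟨_, hd2.symm⟩
  have hn1 : 1 ≤ Module.finrank ℚ K := Module.finrank_pos
  have hdvd : d ∣ 1 := by
    have := Nat.dvd_sub hdvd1 hdvd2
    rwa [Nat.sub_sub_self hn1] at this
  have hd1' : d = 1 := Nat.eq_one_of_dvd_one hdvd
  have hFbot : F = ⊥ := IntermediateField.finrank_eq_one_iff.mp hd1'
  have hrF : r ∈ F := IntermediateField.mem_adjoin_simple_self ℚ r
  rw [hFbot, IntermediateField.mem_bot] at hrF
  rcases hrF with ⟨q, hq⟩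
  exact ⟨q, hq.symm⟩
end

section
/- Let K be a number field of degree n and let 1, v_1, ..., v_{n−1} be a ℚ-basis of K with 1 together with v_1,...,v_{n−1}. Define the (n−2)×(n−2) matrix A = (a_{ij}) where a_{ij} is the coefficient of v_{n−1} in the expansion of v_i·v_j (for 1 ≤ i,j ≤ n−2) with respect to the basis 1, v_1, ..., v_{n−1}. Then A is nondegenerate (invertible over ℚ). -/
set_option maxHeartbeats 1000000 in
set_option synthInstance.maxHeartbeats 400000 in
/-- Let `1 = b 0, v_1 = b 1, …, v_{n-1} = b (n-1)` be a `ℚ`-basis of a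
number field `K` of degree `n ≥ 3`.  The `(n-2) × (n-2)` matrix whose `(i,j)` entry is the
coefficient of `v_{n-1}` in the expansion of `v_i · v_j` in this basis is nondegenerate. -/
theorem multiplication_matrix_nondegenerate
    (K : Type*) [Field K] [NumberField K] (n : ℕ) (hn : 3 ≤ n)
    (hfin : Module.finrank ℚ K = n)
    (b : Module.Basis (Fin n) ℚ K) (hb : b ⟨0, by omega⟩ = 1) :
    (Matrix.of fun i j : Fin (n - 2) =>
        b.repr (b ⟨i.val + 1, by omega⟩ * b ⟨j.val + 1, by omega⟩) ⟨n - 1, by omega⟩).det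
      ≠ 0 := by
  set M : Matrix (Fin (n - 2)) (Fin (n - 2)) ℚ := Matrix.of fun i j : Fin (n - 2) =>
        b.repr (b ⟨i.val + 1, by omega⟩ * b ⟨j.val + 1, by omega⟩) ⟨n - 1, by omega⟩ with hM
  intro hdet
  obtain ⟨c, hc0, hMc⟩ := Matrix.exists_mulVec_eq_zero_iff.mpr hdet
  set φ : K →ₗ[ℚ] ℚ := b.coord ⟨n - 1, by omega⟩ with hφ
  set x : K := ∑ j : Fin (n - 2), c j • b ⟨j.val + 1, by omega⟩ with hx
  -- coordinate of basis vectors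
  have hcoord : ∀ (i i' : Fin n), b.repr (b i) i' = if i = i' then 1 else 0 := by
    intro i i'; rw [b.repr_self]; exact Finsupp.single_apply
  have hreprx : ∀ i' : Fin n, b.repr x i' =
      ∑ j : Fin (n - 2), (if (⟨j.val + 1, by omega⟩ : Fin n) = i' then c j else 0) := by
    intro i'
    rw [hx, map_sum]
    simp [Finsupp.single_apply]
  -- φ x = 0
  have hφx : φ x = 0 := by
    rw [hφ, Module.Basis.coord_apply, hreprx]
    apply Finset.sum_eq_zero
    intro j _
    rw [if_neg]
    intro h
    have := Fin.mk.injEq .. ▸ h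
    omega
  -- key : for i ≠ n-1, φ (x * b i) = 0
  have hkey : ∀ i : Fin n, i.val ≠ n - 1 → φ (x * b i) = 0 := by
    intro i hi
    rcases Nat.eq_zero_or_pos i.val with h0 | hpos
    · have : i = ⟨0, by omega⟩ := Fin.ext h0
      rw [this, hb, mul_one]; exact hφx
    · have hk : i.val - 1 < n - 2 := by omega
      have hival : i = ⟨(⟨i.val - 1, hk⟩ : Fin (n - 2)).val + 1, by omega⟩ := by
        apply Fin.ext; simp; omega
      set k : Fin (n - 2) := ⟨i.val - 1, hk⟩ with hkdef
      have hsplit : x * b i = ∑ j : Fin (n - 2), c j • (b ⟨j.val + 1, by omega⟩ * b i) := by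
        rw [hx, Finset.sum_mul]; simp [smul_mul_assoc]
      rw [hsplit, map_sum]
      have hMck := congrFun hMc k
      rw [Matrix.mulVec, dotProduct, Pi.zero_apply] at hMck
      rw [← hMck]
      apply Finset.sum_congr rfl
      intro j _
      rw [map_smul, smul_eq_mul, mul_comm (M k j)]
      congr 1
      have hbk : b ⟨k.val + 1, by omega⟩ = b i := by rw [← hival]
      rw [hφ, Module.Basis.coord_apply, hM]
      simp only [Matrix.of_apply]
      rw [← hbk, mul_comm]
  -- mult by x preserves the hyperplane
  have hxW : ∀ y : K, φ y = 0 → φ (x * y) = 0 := by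
    intro y hy
    have hyr : y = ∑ i : Fin n, b.repr y i • b i := (b.sum_repr y).symm
    have hsplit : x * y = ∑ i : Fin n, b.repr y i • (x * b i) := by
      conv_lhs => rw [hyr]
      rw [Finset.mul_sum]; simp [mul_smul_comm]
    rw [hsplit, map_sum]
    apply Finset.sum_eq_zero
    intro i _
    rw [map_smul, smul_eq_mul]
    rcases eq_or_ne i.val (n - 1) with h | h
    · have hieq : i = ⟨n - 1, by omega⟩ := Fin.ext h
      have : b.repr y i = 0 := by rw [hieq]; exact hy
      rw [this, zero_mul]
    · rw [hkey i h, mul_zero]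
  -- the subalgebra of elements preserving the hyperplane
  set S : Subalgebra ℚ K := {
    carrier := {z : K | ∀ y : K, φ y = 0 → φ (z * y) = 0}
    mul_mem' := fun {z1 z2} h1 h2 y hy => by
      rw [mul_assoc]; exact h1 _ (h2 _ hy)
    add_mem' := fun {z1 z2} h1 h2 y hy => by
      rw [add_mul, map_add, h1 _ hy, h2 _ hy, add_zero]
    one_mem' := fun y hy => by rwa [one_mul]
    algebraMap_mem' := fun q y hy => by
      rw [Algebra.algebraMap_eq_smul_one, smul_mul_assoc, one_mul, map_smul, hy, smul_zero] }
    with hS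
  have hxS : x ∈ S := hxW
  have hxint : IsIntegral ℚ x := IsIntegral.of_finite ℚ x
  set F : IntermediateField ℚ K := IntermediateField.adjoin ℚ {x} with hF
  have hFS : ∀ z : K, z ∈ F → z ∈ S := by
    intro z hz
    have h1 : F.toSubalgebra = Algebra.adjoin ℚ {x} :=
      IntermediateField.adjoin_simple_toSubalgebra_of_isAlgebraic hxint.isAlgebraic
    have h2 : Algebra.adjoin ℚ {x} ≤ S := Algebra.adjoin_le (Set.singleton_subset_iff.mpr hxS)
    exact h2 (h1 ▸ hz)
  clear_value F
  -- the hyperplane as an F-submodule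
  set W : Submodule F K := {
    carrier := {y : K | φ y = 0}
    add_mem' := fun {y1 y2} h1 h2 => by
      simp only [Set.mem_setOf_eq] at *; rw [map_add, h1, h2, add_zero]
    zero_mem' := by simp
    smul_mem' := fun a y hy => by
      have ha : a • y = (a : K) * y := rfl
      simp only [Set.mem_setOf_eq] at *
      rw [ha]
      exact hFS a a.2 y hy } with hW
  -- dimension count
  have hWker : W.restrictScalars ℚ = LinearMap.ker φ := by
    ext y; simp [hW, LinearMap.mem_ker]
  have hφsurj : Function.Surjective φ := by
    intro q
    refine ⟨q • b ⟨n - 1, by omega⟩, ?_⟩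
    rw [map_smul, hφ, Module.Basis.coord_apply, hcoord]
    simp
  have hrange : LinearMap.range φ = ⊤ := LinearMap.range_eq_top.mpr hφsurj
  have hkerrank : Module.finrank ℚ (LinearMap.ker φ) = n - 1 := by
    have := LinearMap.finrank_range_add_finrank_ker φ
    rw [hrange, hfin] at this
    simp at this
    omega
  have hWrank : Module.finrank ℚ (W.restrictScalars ℚ) = n - 1 := by
    rw [hWker]; exact hkerrank
  have hd1 : Module.finrank ℚ F * Module.finrank F K = n := by
    rw [Module.finrank_mul_finrank, hfin]
  have hd2 : Module.finrank ℚ F * Module.finrank F W = n - 1 := by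
    rw [← hWrank]
    exact Module.finrank_mul_finrank ℚ F W
  have hdvd1 : (Module.finrank ℚ F) ∣ n := ⟨_, hd1.symm⟩
  have hdvd2 : (Module.finrank ℚ F) ∣ n - 1 := ⟨_, hd2.symm⟩
  have hdvd : (Module.finrank ℚ F) ∣ 1 := by
    have h := Nat.dvd_sub hdvd1 hdvd2
    have h1 : n - (n - 1) = 1 := by omega
    rwa [h1] at h
  have hd1' : Module.finrank ℚ F = 1 := Nat.dvd_one.mp hdvd
  -- so x is rational
  rw [hF] at hd1'
  have hxbot : x ∈ (⊥ : IntermediateField ℚ K) :=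
    (IntermediateField.finrank_adjoin_simple_eq_one_iff).mp hd1'
  obtain ⟨q, hq⟩ := IntermediateField.mem_bot.mp hxbot
  -- contradiction with linear independence
  obtain ⟨j0, hj0⟩ := Function.ne_iff.mp hc0
  have h1 : b.repr x ⟨j0.val + 1, by omega⟩ = c j0 := by
    rw [hreprx]
    rw [Finset.sum_eq_single j0]
    · simp
    · intro j _ hj
      rw [if_neg]
      intro h
      apply hj
      apply Fin.ext
      have := Fin.mk.injEq .. ▸ h
      omega
    · intro h; exact absurd (Finset.mem_univ j0) h
  have h2 : b.repr x ⟨j0.val + 1, by omega⟩ = 0 := by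
    rw [← hq, Algebra.algebraMap_eq_smul_one, ← hb, map_smul, Finsupp.smul_apply, hcoord,
      if_neg, smul_zero]
    intro h
    have := Fin.mk.injEq .. ▸ h
    omega
  exact hj0 (by rw [← h1, h2] : c j0 = 0)
end

section
/- Let C be a smooth, projective, geometrically irreducible curve of genus g over a finite field k, and let E be a divisor on C of degree g. Let H^0(C, 2E)^sq denote the set of nonzero global sections f of O_C(2E) such that the divisor div(f) + 2E is divisible by 2 in the group of divisors (i.e., div(f) ≡ 0 mod 2 in Div(C)/2·Div(C) after adding 2E). Then there is a surjection from the projectivization ℙH^0(C,2E)^sq onto the 2-torsion subgroup Pic^0(C)(k)[2]. -/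
/-- Abstract data of a smooth, projective, geometrically irreducible curve of genus `g`
over a finite field `k`: a set of closed points, the function field `F`, the divisor map,
the dimensions `ℓ(D)` of the Riemann–Roch spaces, and the Riemann–Roch theorem. Divisors
are finitely supported `ℤ`-valued functions on the closed points. -/
structure RRCurve (k : Type*) [Field k] [Fintype k]
    (Point : Type*) (F : Type*) [Field F] [Algebra k F] : Type _ where
  /-- the genus of the curve -/
  g : ℕ
  /-- the degree homomorphism on the group of divisors -/
  deg : (Point →₀ ℤ) →+ ℤ
  /-- every closed point has positive degree -/
  deg_single_pos : ∀ p : Point, 0 < deg (Finsupp.single p 1)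
  /-- the divisor of a (nonzero) rational function -/
  divisor : F → (Point →₀ ℤ)
  divisor_mul : ∀ f h : F, f ≠ 0 → h ≠ 0 → divisor (f * h) = divisor f + divisor h
  /-- nonzero constants have trivial divisor -/
  divisor_algebraMap : ∀ c : k, c ≠ 0 → divisor (algebraMap k F c) = 0
  /-- principal divisors have degree zero -/
  deg_divisor : ∀ f : F, f ≠ 0 → deg (divisor f) = 0
  /-- `ell D` is the `k`-dimension of the Riemann–Roch space `L(D)` -/
  ell : (Point →₀ ℤ) → ℕ
  /-- the Riemann–Roch space `L(D) = {f : f = 0 ∨ div f + D ≥ 0}` has `|k| ^ ℓ(D)` elements -/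
  card_RRspace : ∀ D : Point →₀ ℤ,
    Nat.card {f : F // f ≠ 0 → ∀ p, 0 ≤ divisor f p + D p} = Fintype.card k ^ ell D
  /-- `ℓ(D)` depends only on the linear equivalence class of `D` -/
  ell_congr : ∀ D D' : Point →₀ ℤ, (∃ f : F, f ≠ 0 ∧ D - D' = divisor f) → ell D = ell D'
  /-- the Riemann–Roch inequality -/
  riemannRoch_le : ∀ D : Point →₀ ℤ, deg D + 1 - g ≤ ell D
  /-- Riemann–Roch in the range where `h¹` vanishes -/
  riemannRoch_eq : ∀ D : Point →₀ ℤ, 2 * (g : ℤ) - 2 < deg D → (ell D : ℤ) = deg D + 1 - g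

/-- The subgroup of principal divisors. -/
noncomputable def RRCurve.principal {k : Type*} [Field k] [Fintype k] {Point F : Type*} [Field F]
    [Algebra k F] (C : RRCurve k Point F) : AddSubgroup (Point →₀ ℤ) :=
  AddSubgroup.closure {D | ∃ f : F, f ≠ 0 ∧ C.divisor f = D}

/-- The 2-torsion of `Pic⁰(C)(k)`: classes in the divisor class group `Div / Prin` that are
represented by a degree-0 divisor and are killed by 2. -/
def RRCurve.picZeroTwoTorsion {k : Type*} [Field k] [Fintype k] {Point F : Type*} [Field F]
    [Algebra k F] (C : RRCurve k Point F) : Set ((Point →₀ ℤ) ⧸ C.principal) :=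
  {x | (∃ D : Point →₀ ℤ, C.deg D = 0 ∧ QuotientAddGroup.mk D = x) ∧ 2 • x = 0}



section Aux
variable {k : Type*} [Field k] [Fintype k] {Point F : Type*} [Field F] [Algebra k F]
  (C : RRCurve k Point F)

lemma RRCurve.divisor_one' : C.divisor 1 = 0 := by
  simpa using C.divisor_algebraMap 1 one_ne_zero

lemma RRCurve.divisor_inv' (f : F) (hf : f ≠ 0) : C.divisor f⁻¹ = - C.divisor f := by
  have h := C.divisor_mul f f⁻¹ hf (inv_ne_zero hf)
  rw [mul_inv_cancel₀ hf, C.divisor_one'] at h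
  exact eq_neg_of_add_eq_zero_right h.symm

lemma RRCurve.mem_principal_iff' (D : Point →₀ ℤ) :
    D ∈ C.principal ↔ ∃ f : F, f ≠ 0 ∧ C.divisor f = D := by
  constructor
  · intro h
    refine AddSubgroup.closure_induction (fun x hx => hx) ?_ ?_ ?_ h
    · exact ⟨1, one_ne_zero, C.divisor_one'⟩
    · rintro x y - - ⟨f, hf, rfl⟩ ⟨g, hg, rfl⟩
      exact ⟨f * g, mul_ne_zero hf hg, C.divisor_mul f g hf hg⟩
    · rintro x - ⟨f, hf, rfl⟩
      exact ⟨f⁻¹, inv_ne_zero hf, C.divisor_inv' f hf⟩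
  · rintro ⟨f, hf, rfl⟩
    exact AddSubgroup.subset_closure ⟨f, hf, rfl⟩

lemma RRCurve.exists_section' (D : Point →₀ ℤ) (hD : 1 ≤ C.ell D) :
    ∃ f : F, f ≠ 0 ∧ ∀ p, 0 ≤ C.divisor f p + D p := by
  have hcard : 1 < Nat.card {f : F // f ≠ 0 → ∀ p, 0 ≤ C.divisor f p + D p} := by
    rw [C.card_RRspace D]
    calc 1 < Fintype.card k := Fintype.one_lt_card
    _ ≤ Fintype.card k ^ C.ell D := Nat.le_self_pow (by omega) _
  have hfin : Finite {f : F // f ≠ 0 → ∀ p, 0 ≤ C.divisor f p + D p} :=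
    Nat.finite_of_card_ne_zero (by omega)
  have : Nontrivial {f : F // f ≠ 0 → ∀ p, 0 ≤ C.divisor f p + D p} :=
    Finite.one_lt_card_iff_nontrivial.mp hcard
  obtain ⟨a, b, hab⟩ := this
  rcases eq_or_ne (a : F) 0 with ha | ha
  · have hb : (b : F) ≠ 0 := fun hb => hab (Subtype.ext (by rw [ha, hb]))
    exact ⟨b, hb, b.2 hb⟩
  · exact ⟨a, ha, a.2 ha⟩

end Aux

/-- Let `E` be a divisor of degree `g`.  Among the nonzero global sections
of `O_C(2E)`, consider those `f` for which `div f + 2E` is divisible by 2 in the divisor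
group.  Then there is a surjection from the projectivization of this set of sections onto
`Pic⁰(C)(k)[2]`, i.e. a surjective map defined on the sections which is invariant under
scaling by nonzero constants in `k`. -/
theorem surjection_from_projective_square_sections
    (k : Type*) [Field k] [Fintype k] (Point F : Type*) [Field F] [Algebra k F]
    (C : RRCurve k Point F) (E : Point →₀ ℤ) (hE : C.deg E = C.g) :
    ∃ φ : {f : F // f ≠ 0 ∧ (∀ p, 0 ≤ C.divisor f p + (2 • E) p) ∧
            ∃ Dplus : Point →₀ ℤ, C.divisor f + 2 • E = 2 • Dplus} →
          C.picZeroTwoTorsion,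
      Function.Surjective φ ∧
      ∀ (f₁ f₂ : {f : F // f ≠ 0 ∧ (∀ p, 0 ≤ C.divisor f p + (2 • E) p) ∧
            ∃ Dplus : Point →₀ ℤ, C.divisor f + 2 • E = 2 • Dplus}) (c : k),
        c ≠ 0 → (f₂ : F) = algebraMap k F c * (f₁ : F) → φ f₁ = φ f₂ := by
  classical
  have htwo : ∀ (A B : Point →₀ ℤ), 2 • A = 2 • B → A = B := by
    intro A B h
    ext p
    have := DFunLike.congr_fun h p
    simp only [Finsupp.smul_apply, smul_eq_mul, nsmul_eq_mul, Nat.cast_ofNat] at this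
    omega
  set T := {f : F // f ≠ 0 ∧ (∀ p, 0 ≤ C.divisor f p + (2 • E) p) ∧
      ∃ Dplus : Point →₀ ℤ, C.divisor f + 2 • E = 2 • Dplus} with hT
  let Dp : T → (Point →₀ ℤ) := fun f => Classical.choose f.2.2.2
  have hDp : ∀ f : T, C.divisor f.1 + 2 • E = 2 • Dp f := fun f => Classical.choose_spec f.2.2.2
  have hmem : ∀ f : T,
      (QuotientAddGroup.mk (E - Dp f) : (Point →₀ ℤ) ⧸ C.principal) ∈ C.picZeroTwoTorsion := by
    intro f
    have hdegDp : C.deg (Dp f) = C.g := by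
      have hdeg := congrArg C.deg (hDp f)
      have h1 : C.deg (C.divisor f.1) = 0 := C.deg_divisor _ f.2.1
      simp only [map_add, map_nsmul, h1, hE, smul_eq_mul, nsmul_eq_mul, Nat.cast_ofNat,
        zero_add] at hdeg
      omega
    constructor
    · refine ⟨E - Dp f, ?_, rfl⟩
      simp [map_sub, hE, hdegDp]
    · have hpr : (2 : ℕ) • (E - Dp f) ∈ C.principal := by
        rw [C.mem_principal_iff']
        refine ⟨(f : F)⁻¹, inv_ne_zero f.2.1, ?_⟩
        rw [C.divisor_inv' _ f.2.1]
        have h := hDp f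
        rw [smul_sub, ← h]
        abel
      have : (2 : ℕ) • (QuotientAddGroup.mk (E - Dp f) : (Point →₀ ℤ) ⧸ C.principal)
          = QuotientAddGroup.mk ((2 : ℕ) • (E - Dp f)) := by
        simp
      rw [this, QuotientAddGroup.eq_zero_iff]
      exact hpr
  refine ⟨fun f => ⟨QuotientAddGroup.mk (E - Dp f), hmem f⟩, ?_, ?_⟩
  · rintro ⟨x, ⟨D, hdegD, rfl⟩, h2x⟩
    have h2D : (2 : ℕ) • D ∈ C.principal := by
      rw [← QuotientAddGroup.eq_zero_iff]
      simpa using h2x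
    obtain ⟨h, hh0, hhD⟩ := (C.mem_principal_iff' _).mp h2D
    have hellED : 1 ≤ C.ell (E - D) := by
      have := C.riemannRoch_le (E - D)
      rw [map_sub, hE, hdegD] at this
      omega
    obtain ⟨u, hu0, hu⟩ := C.exists_section' (E - D) hellED
    set f : F := u * u * h⁻¹ with hf
    have hf0 : f ≠ 0 := by
      apply mul_ne_zero (mul_ne_zero hu0 hu0) (inv_ne_zero hh0)
    have hdivf : C.divisor f = 2 • C.divisor u - 2 • D := by
      rw [hf, C.divisor_mul _ _ (mul_ne_zero hu0 hu0) (inv_ne_zero hh0),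
        C.divisor_mul u u hu0 hu0, C.divisor_inv' h hh0, hhD, two_smul]
      abel
    have hDplus : C.divisor f + 2 • E = 2 • (C.divisor u + (E - D)) := by
      rw [hdivf, smul_add, smul_sub]
      abel
    have hpos : ∀ p, 0 ≤ C.divisor f p + (2 • E) p := by
      intro p
      have := DFunLike.congr_fun hDplus p
      simp only [Finsupp.add_apply, Finsupp.smul_apply, Finsupp.sub_apply,
        smul_eq_mul, nsmul_eq_mul, Nat.cast_ofNat] at this ⊢
      have hp := hu p
      simp only [Finsupp.sub_apply] at hp
      omega
    refine ⟨⟨f, hf0, hpos, ⟨C.divisor u + (E - D), hDplus⟩⟩, ?_⟩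
    apply Subtype.ext
    show QuotientAddGroup.mk (E - Dp _) = QuotientAddGroup.mk D
    have hDpval : Dp ⟨f, hf0, hpos, ⟨C.divisor u + (E - D), hDplus⟩⟩ = C.divisor u + (E - D) := by
      apply htwo
      rw [← hDp ⟨f, hf0, hpos, ⟨C.divisor u + (E - D), hDplus⟩⟩]
      exact hDplus
    rw [hDpval, QuotientAddGroup.eq]
    rw [C.mem_principal_iff']
    exact ⟨u, hu0, by abel⟩
  · intro f₁ f₂ c hc hcf
    have hac : algebraMap k F c ≠ 0 := fun h =>
      hc ((algebraMap k F).injective (by simpa using h))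
    have hdiv : C.divisor f₂.1 = C.divisor f₁.1 := by
      rw [hcf, C.divisor_mul _ _ hac f₁.2.1, C.divisor_algebraMap c hc, zero_add]
    have : Dp f₁ = Dp f₂ := by
      apply htwo
      rw [← hDp f₁, ← hDp f₂, hdiv]
    simp only [this]
end

section
/- Let K be a number field of degree n with no index-2 subfield, and suppose every proper subfield F ⊊ K with β ∈ F forces [K:F] ≥ 4. Then for any fixed proper subfield F of K with [K:F] = d ≥ 4, the number of β ∈ O_F with |σ(β)| ≤ C·|Disc(K)|^(1/n) for all embeddings σ of F is at most C'(n)·|Disc(K)|^(1/d) ≤ C'(n)·|Disc(K)|^(1/4). -/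
open NumberField

/-- Packing bound: integers of `F` whose embeddings all have norm at most `B` number at most
`(2(⌈2B⌉+1)+1)^[F:ℚ]`, via the injection given by floors of `2·Re, 2·Im` at each infinite
place. -/
lemma card_le_of_norm_le (F : Type) [Field F] [NumberField F] (B : ℝ) (hB : 0 ≤ B) :
    Nat.card {β : 𝓞 F // ∀ σ : F →+* ℂ, ‖σ (β : F)‖ ≤ B}
      ≤ (2 * (⌈2*B⌉₊ + 1) + 1) ^ Module.finrank ℚ F := by
  classical
  set Mn : ℕ := ⌈2*B⌉₊ + 1 with hMn
  set M : ℤ := (Mn : ℤ) with hM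
  have h2BM : 2 * B ≤ (M : ℝ) := by
    have := Nat.le_ceil (2*B)
    push_cast [hM, hMn]
    push_cast at this
    linarith
  set S := {β : 𝓞 F // ∀ σ : F →+* ℂ, ‖σ (β : F)‖ ≤ B} with hS
  set A : InfinitePlace F → Finset (ℤ × ℤ) := fun w =>
    if w.IsReal then Finset.Icc (-M) M ×ˢ {(0:ℤ)} else Finset.Icc (-M) M ×ˢ Finset.Icc (-M) M
    with hA
  set f : S → (InfinitePlace F → ℤ × ℤ) := fun β w =>
    (⌊2 * (w.embedding (β.1 : F)).re⌋, ⌊2 * (w.embedding (β.1 : F)).im⌋) with hf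
  have hinj : Function.Injective f := by
    intro β β' h
    have key : ∀ w : InfinitePlace F, w (((β.1 : F) - (β'.1 : F))) < 1 := by
      intro w
      have hw := congrFun h w
      simp only [hf, Prod.mk.injEq] at hw
      have hre := Int.abs_sub_lt_one_of_floor_eq_floor hw.1
      have him := Int.abs_sub_lt_one_of_floor_eq_floor hw.2
      have hre' : |(w.embedding (β.1 : F)).re - (w.embedding (β'.1 : F)).re| < 1/2 := by
        rw [show (2:ℝ) * (w.embedding (β.1 : F)).re - 2 * (w.embedding (β'.1 : F)).re
            = 2 * ((w.embedding (β.1 : F)).re - (w.embedding (β'.1 : F)).re) by ring,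
          abs_mul] at hre
        rw [abs_two] at hre
        linarith
      have him' : |(w.embedding (β.1 : F)).im - (w.embedding (β'.1 : F)).im| < 1/2 := by
        rw [show (2:ℝ) * (w.embedding (β.1 : F)).im - 2 * (w.embedding (β'.1 : F)).im
            = 2 * ((w.embedding (β.1 : F)).im - (w.embedding (β'.1 : F)).im) by ring,
          abs_mul] at him
        rw [abs_two] at him
        linarith
      rw [← InfinitePlace.norm_embedding_eq, map_sub]
      calc ‖w.embedding (β.1 : F) - w.embedding (β'.1 : F)‖
          ≤ |(w.embedding (β.1 : F) - w.embedding (β'.1 : F)).re|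
            + |(w.embedding (β.1 : F) - w.embedding (β'.1 : F)).im| := by
            exact Complex.norm_le_abs_re_add_abs_im _
        _ < 1 := by
            simp only [Complex.sub_re, Complex.sub_im]
            linarith
    have hzero : β.1 = β'.1 := by
      by_contra hne
      have hne' : β.1 - β'.1 ≠ 0 := sub_ne_zero.mpr hne
      obtain ⟨w⟩ := (inferInstance : Nonempty (InfinitePlace F))
      have h1 : 1 ≤ w ((β.1 - β'.1 : 𝓞 F) : F) :=
        InfinitePlace.one_le_of_lt_one hne' (fun z _ => by
          push_cast
          exact key z)
      have h2 : w ((β.1 - β'.1 : 𝓞 F) : F) < 1 := by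
        push_cast
        exact key w
      linarith
    exact Subtype.ext hzero
  have hfloor : ∀ x : ℝ, |x| ≤ B → ⌊2*x⌋ ∈ Finset.Icc (-M) M := by
    intro x hx
    rw [Finset.mem_Icc]
    have hx1 : 2*x ≤ (M:ℝ) := by
      have : x ≤ B := (abs_le.mp hx).2
      linarith
    have hx2 : (-M:ℝ) ≤ 2*x := by
      have : -B ≤ x := (abs_le.mp hx).1
      push_cast
      linarith
    constructor
    · exact Int.le_floor.mpr (by push_cast; linarith)
    · exact Int.le_of_lt_add_one (by
        have := Int.floor_le (2*x)
        have : (⌊2*x⌋ : ℝ) ≤ (M:ℝ) := le_trans this hx1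
        exact_mod_cast Int.lt_add_one_of_le (by exact_mod_cast this))
  have hrange : Set.range f ⊆ ↑(Fintype.piFinset A) := by
    rintro _ ⟨β, rfl⟩
    simp only [Finset.coe_sort_coe, Finset.mem_coe, Fintype.mem_piFinset]
    intro w
    have hb : ∀ σ : F →+* ℂ, ‖σ (β.1 : F)‖ ≤ B := β.2
    have hre : |(w.embedding (β.1 : F)).re| ≤ B :=
      le_trans (Complex.abs_re_le_norm _) (by exact hb _)
    have him : |(w.embedding (β.1 : F)).im| ≤ B :=
      le_trans (Complex.abs_im_le_norm _) (by exact hb _)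
    simp only [hA, hf]
    split_ifs with hw
    · rw [Finset.mem_product]
      refine ⟨hfloor _ hre, ?_⟩
      have : (w.embedding (β.1 : F)).im = 0 := by
        rw [← InfinitePlace.embedding_of_isReal_apply hw]
        exact Complex.ofReal_im _
      simp [this]
    · rw [Finset.mem_product]
      exact ⟨hfloor _ hre, hfloor _ him⟩
  calc Nat.card S = Nat.card (Set.range f) := (Nat.card_range_of_injective hinj).symm
    _ = (Set.range f).ncard := Nat.card_coe_set_eq _
    _ ≤ (↑(Fintype.piFinset A) : Set _).ncard :=
        Set.ncard_le_ncard hrange (Finset.finite_toSet _)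
    _ = (Fintype.piFinset A).card := Set.ncard_coe_finset _
    _ = ∏ w : InfinitePlace F, (A w).card := Fintype.card_piFinset A
    _ = ∏ w : InfinitePlace F, (2 * Mn + 1) ^ w.mult := by
        refine Finset.prod_congr rfl fun w _ => ?_
        have hIcc : (Finset.Icc (-M) M).card = 2 * Mn + 1 := by
          rw [Int.card_Icc]
          omega
        simp only [hA, InfinitePlace.mult]
        split_ifs with hw
        · rw [Finset.card_product, hIcc, Finset.card_singleton, pow_one, mul_one]
        · rw [Finset.card_product, hIcc, sq]
    _ = (2 * Mn + 1) ^ ∑ w : InfinitePlace F, w.mult :=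
        Finset.prod_pow_eq_pow_sum _ _ _
    _ = (2 * Mn + 1) ^ Module.finrank ℚ F := by rw [InfinitePlace.sum_mult_eq]

/-- Let `K` be a degree-`n` number field with no index-2 subfield, and let
`F ⊆ K` be a proper subfield with `[K : F] = d ≥ 4`.  The number of `β ∈ 𝓞 F` all of whose
archimedean embeddings have absolute value at most `C·|Disc K|^(1/n)` is at most
`C'(n) · |Disc K|^(1/d) ≤ C'(n) · |Disc K|^(1/4)`. -/
theorem count_integers_of_subfield_in_box (n : ℕ) (hn : 0 < n) (C : ℝ) (hC : 0 < C) :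
    ∃ C' : ℝ, 0 < C' ∧
      ∀ (F K : Type) [Field F] [NumberField F] [Field K] [NumberField K] [Algebra F K],
        Module.finrank ℚ K = n →
        (∀ L : IntermediateField ℚ K, Module.finrank L K ≠ 2) →
        ∀ d : ℕ, Module.finrank F K = d → 4 ≤ d →
          (Nat.card {β : 𝓞 F //
              ∀ σ : F →+* ℂ, ‖σ (β : F)‖ ≤ C * (|discr K| : ℝ) ^ ((1 : ℝ) / n)} : ℝ)
            ≤ C' * (|discr K| : ℝ) ^ ((1 : ℝ) / d) ∧
          C' * (|discr K| : ℝ) ^ ((1 : ℝ) / d) ≤ C' * (|discr K| : ℝ) ^ ((1 : ℝ) / 4) := by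

  refine ⟨(4*C+5)^n, by positivity, ?_⟩
  intro F K _ _ _ _ _ hKn _ d hd hd4
  have hd0 : 0 < d := by omega
  set D : ℝ := (|discr K| : ℝ) with hD
  have hD1 : (1:ℝ) ≤ D := by
    rw [hD]
    exact_mod_cast Int.one_le_abs (discr_ne_zero K)
  have hD0 : (0:ℝ) ≤ D := le_trans zero_le_one hD1
  set t : ℝ := D ^ ((1:ℝ)/n) with ht
  have ht1 : (1:ℝ) ≤ t := Real.one_le_rpow hD1 (by positivity)
  have ht0 : 0 < t := lt_of_lt_of_le one_pos ht1
  set B : ℝ := C * t with hB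
  have hB0 : 0 < B := by positivity
  set m := Module.finrank ℚ F with hm
  have hm0 : 0 < m := Module.finrank_pos
  have hmd : m * d = n := by rw [hm, ← hd, Module.finrank_mul_finrank ℚ F K, hKn]
  have hmn : m ≤ n := by
    calc m = m * 1 := (mul_one m).symm
      _ ≤ m * d := Nat.mul_le_mul_left m hd0
      _ = n := hmd
  constructor
  · -- main counting bound
    have hcard := card_le_of_norm_le F B (le_of_lt hB0)
    have hceil : (⌈2*B⌉₊ : ℝ) < 2*B + 1 := Nat.ceil_lt_add_one (by positivity)
    have hcast : ((2 * (⌈2*B⌉₊ + 1) + 1 : ℕ) : ℝ) ≤ 4*B + 5 := by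
      push_cast
      linarith
    have step1 : (Nat.card {β : 𝓞 F //
        ∀ σ : F →+* ℂ, ‖σ (β : F)‖ ≤ C * (|discr K| : ℝ) ^ ((1 : ℝ) / n)} : ℝ)
        ≤ (4*B + 5) ^ m := by
      calc (Nat.card {β : 𝓞 F //
            ∀ σ : F →+* ℂ, ‖σ (β : F)‖ ≤ C * (|discr K| : ℝ) ^ ((1 : ℝ) / n)} : ℝ)
          ≤ ((2 * (⌈2*B⌉₊ + 1) + 1 : ℕ) : ℝ) ^ m := by
            have hEq : C * (|discr K| : ℝ) ^ ((1 : ℝ) / n) = B := rfl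
            simp only [hEq]
            exact_mod_cast hcard
        _ ≤ (4*B + 5) ^ m := by
            exact pow_le_pow_left₀ (by positivity) hcast m
    have step2 : (4*B + 5 : ℝ) ≤ (4*C + 5) * t := by
      rw [hB]
      nlinarith
    have step3 : ((4*C+5) * t) ^ m = (4*C+5)^m * t^m := mul_pow _ _ _
    have step4 : t ^ m = D ^ ((1:ℝ)/d) := by
      rw [ht, ← Real.rpow_natCast (D ^ ((1:ℝ)/n)) m, ← Real.rpow_mul hD0]
      congr 1
      have hn' : (n:ℝ) = (m:ℝ) * (d:ℝ) := by exact_mod_cast hmd.symm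
      have hm' : (m:ℝ) ≠ 0 := Nat.cast_ne_zero.mpr hm0.ne'
      have hd' : (d:ℝ) ≠ 0 := Nat.cast_ne_zero.mpr hd0.ne'
      field_simp [hn']
      linarith
    have step5 : (4*C+5:ℝ)^m ≤ (4*C+5)^n :=
      pow_le_pow_right₀ (by linarith) hmn
    calc (Nat.card {β : 𝓞 F //
          ∀ σ : F →+* ℂ, ‖σ (β : F)‖ ≤ C * (|discr K| : ℝ) ^ ((1 : ℝ) / n)} : ℝ)
        ≤ (4*B + 5) ^ m := step1
      _ ≤ ((4*C+5) * t) ^ m := pow_le_pow_left₀ (by positivity) step2 m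
      _ = (4*C+5)^m * t^m := step3
      _ = (4*C+5)^m * D ^ ((1:ℝ)/d) := by rw [step4]
      _ ≤ (4*C+5)^n * D ^ ((1:ℝ)/d) := by
          have : (0:ℝ) ≤ D ^ ((1:ℝ)/d) := Real.rpow_nonneg hD0 _
          exact mul_le_mul_of_nonneg_right step5 this
  · -- exponent monotonicity
    have h4d : (1:ℝ)/d ≤ 1/4 := by
      apply one_div_le_one_div_of_le (by norm_num)
      exact_mod_cast hd4
    exact mul_le_mul_of_nonneg_left
      (Real.rpow_le_rpow_of_exponent_le hD1 h4d) (by positivity)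
end
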